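/- (Weak monotonicity for the linear-quadratic MFG terminal cost) Let q, q̄, s be positive reals with q + q̄ ≥ s·q̄. For m ∈ P(ℝ) with finite first moment set g(x,m) = q x² + q̄ (x − s∫ y dm(y))², with x-derivative g_x(x,m) = 2qx + 2q̄(x − s∫ y dm(y)). Then for every probability space (Ω, F, ℙ) and all square-integrable real random variables ξ, ξ' on it, E[(g_x(ξ, law(ξ)) − g_x(ξ', law(ξ')))·(ξ − ξ')] ≥ 2(q + q̄ − s·q̄)·E[(ξ − ξ')²] ≥ 0. -/

import Mathlib

open MeasureTheory

/-- The `x`-derivative `g_x(x,m) = 2qx + 2q̄(x - s ∫ y dm(y))` of the linear-quadratic MFG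
terminal cost `g(x,m) = qx² + q̄(x - s ∫ y dm(y))²`. -/
noncomputable def gxLQ (q qbar s x : ℝ) (m : Measure ℝ) : ℝ :=
  2 * q * x + 2 * qbar * (x - s * ∫ y, y ∂m)

/-- weak monotonicity for the linear-quadratic MFG terminal cost. -/
theorem linear_quadratic_weak_monotonicity
    (q qbar s : ℝ) (hq : 0 < q) (hqbar : 0 < qbar) (hs : 0 < s)
    (hqs : s * qbar ≤ q + qbar) :
    (∀ (x : ℝ) (m : Measure ℝ),
      HasDerivAt (fun z => q * z ^ 2 + qbar * (z - s * ∫ y, y ∂m) ^ 2) (gxLQ q qbar s x m) x) ∧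
    ∀ (Ω : Type*) (mΩ : MeasurableSpace Ω) (P : Measure Ω), IsProbabilityMeasure P →
      ∀ ξ ξ' : Ω → ℝ, Measurable ξ → Measurable ξ' →
        Integrable (fun ω => ξ ω ^ 2) P → Integrable (fun ω => ξ' ω ^ 2) P →
        (2 * (q + qbar - s * qbar) * ∫ ω, (ξ ω - ξ' ω) ^ 2 ∂P
          ≤ ∫ ω, (gxLQ q qbar s (ξ ω) (P.map ξ) - gxLQ q qbar s (ξ' ω) (P.map ξ'))
              * (ξ ω - ξ' ω) ∂P) ∧
        0 ≤ 2 * (q + qbar - s * qbar) * ∫ ω, (ξ ω - ξ' ω) ^ 2 ∂P := by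
  constructor
  · intro x m
    set c := s * ∫ y, y ∂m with hc
    have h1 : HasDerivAt (fun z : ℝ => z ^ 2) (2 * x) x := by
      simpa using hasDerivAt_pow 2 x
    have h2 : HasDerivAt (fun z : ℝ => (z - c) ^ 2) (2 * (x - c)) x := by
      have := ((hasDerivAt_id x).sub_const c).pow 2
      exact (by simpa using this : HasDerivAt ((fun x => x - c) ^ 2) (2 * (x - c)) x)
    have h := (h1.const_mul q).add (h2.const_mul qbar)
    refine h.congr_deriv ?_
    simp only [gxLQ, ← hc]
    ring
  · intro Ω mΩ P hP ξ ξ' hξ hξ' hξ2 hξ'2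
    have hm2ξ : MemLp ξ 2 P := (memLp_two_iff_integrable_sq hξ.aestronglyMeasurable).2 hξ2
    have hm2ξ' : MemLp ξ' 2 P := (memLp_two_iff_integrable_sq hξ'.aestronglyMeasurable).2 hξ'2
    have hmd : MemLp (fun ω => ξ ω - ξ' ω) 2 P := hm2ξ.sub hm2ξ'
    have hdint : Integrable (fun ω => ξ ω - ξ' ω) P := hmd.integrable (by norm_num)
    have hd2int : Integrable (fun ω => (ξ ω - ξ' ω) ^ 2) P :=
      (memLp_two_iff_integrable_sq hmd.aestronglyMeasurable).1 hmd
    set a := ∫ ω, ξ ω ∂P with ha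
    set b := ∫ ω, ξ' ω ∂P with hb
    have hmapa : ∫ y, y ∂(P.map ξ) = a :=
      integral_map hξ.aemeasurable aestronglyMeasurable_id
    have hmapb : ∫ y, y ∂(P.map ξ') = b :=
      integral_map hξ'.aemeasurable aestronglyMeasurable_id
    set I2 := ∫ ω, (ξ ω - ξ' ω) ^ 2 ∂P with hI2
    have hI1 : ∫ ω, (ξ ω - ξ' ω) ∂P = a - b :=
      integral_sub (hm2ξ.integrable (by norm_num)) (hm2ξ'.integrable (by norm_num))
    have hvar : (a - b) ^ 2 ≤ I2 := by
      have hv := ProbabilityTheory.variance_nonneg (fun ω => ξ ω - ξ' ω) P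
      rw [ProbabilityTheory.variance_eq_sub hmd] at hv
      simp only [Pi.pow_apply, hI1] at hv
      linarith
    have hrw : ∫ ω, (gxLQ q qbar s (ξ ω) (P.map ξ) - gxLQ q qbar s (ξ' ω) (P.map ξ'))
              * (ξ ω - ξ' ω) ∂P
        = 2 * (q + qbar) * I2 - 2 * qbar * s * (a - b) * (a - b) := by
      have heq : ∀ ω, (gxLQ q qbar s (ξ ω) (P.map ξ) - gxLQ q qbar s (ξ' ω) (P.map ξ'))
              * (ξ ω - ξ' ω)
          = 2 * (q + qbar) * (ξ ω - ξ' ω) ^ 2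
            - 2 * qbar * s * (a - b) * (ξ ω - ξ' ω) := by
        intro ω
        simp only [gxLQ, hmapa, hmapb]
        ring
      rw [integral_congr_ae (Filter.Eventually.of_forall heq),
        integral_sub (hd2int.const_mul _) (hdint.const_mul _),
        integral_const_mul, integral_const_mul, hI1]
    have hI2nn : 0 ≤ I2 := integral_nonneg fun ω => sq_nonneg _
    constructor
    · rw [hrw]
      nlinarith [mul_le_mul_of_nonneg_left hvar
        (by positivity : (0:ℝ) ≤ 2 * s * qbar), sq_nonneg (a - b)]
    · exact mul_nonneg (by linarith) hI2nn
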